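/- Define B_f(r) as the least n such that every r-coloring of {0,…,n−1} has a monochromatic set H with |H| > f(gs(H)). For f(d) = 2^d and all r > 0, B_f(r) > 2_{⌊log₂ r⌋}, where 2_0 = 1 and 2_{k+1} = 2^{2_k} is the tower function. -/

import Mathlib

/-- `H` has gaps bounded by `d`: any element with a successor in `H` has one within `d`. -/
def GapsBdd (H : Finset ℕ) (d : ℕ) : Prop :=
  ∀ x ∈ H, (∃ y ∈ H, x < y) → ∃ z ∈ H, x < z ∧ z ≤ x + d

/-- gap size: largest difference between consecutive elements; `1` if `|H| ≤ 1`. -/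
noncomputable def gapSize (H : Finset ℕ) : ℕ :=
  if H.card ≤ 1 then 1 else sInf {d | GapsBdd H d}

/-- `X` is piecewise `d`-syndetic. -/
def PWSyndWith (d : ℕ) (X : Set ℕ) : Prop :=
  ∀ n : ℕ, ∃ H : Finset ℕ, (∀ x ∈ H, x ∈ X) ∧ n ≤ H.card ∧ GapsBdd H d

/-- `X` is piecewise syndetic. -/
def PWSynd (X : Set ℕ) : Prop := ∃ d, PWSyndWith d X

/-- consecutive elements of `X` differ by at most `d`. -/
def SyndWith (d : ℕ) (X : Set ℕ) : Prop :=
  ∀ x ∈ X, ∃ y ∈ X, x < y ∧ y ≤ x + d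

/-- `X` is syndetic: an infinite set with bounded gaps. -/
def Syndetic (X : Set ℕ) : Prop := X.Infinite ∧ ∃ d, SyndWith d X

/-- `X` is thick: contains arbitrarily long intervals. -/
def Thick (X : Set ℕ) : Prop := ∀ n : ℕ, ∃ a : ℕ, ∀ m, a ≤ m → m < a + n → m ∈ X

/-- `X` contains arbitrarily long arithmetic progressions. -/
def APSet (X : Set ℕ) : Prop := ∀ l : ℕ, ∃ a e : ℕ, 0 < e ∧ ∀ i < l, a + i * e ∈ X

/-- The tower function: `2_0 = 1`, `2_{k+1} = 2^{2_k}`. -/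
def towerN : ℕ → ℕ
  | 0 => 1
  | k + 1 => 2 ^ towerN k

/-- The Brown number `B_f(r)`: least `n` such that every `r`-coloring of `{0,…,n-1}`
has a monochromatic `H` with `|H| > f(gs(H))`. -/
noncomputable def brownB (f : ℕ → ℕ) (r : ℕ) : ℕ :=
  sInf {n : ℕ | ∀ C : ℕ → Fin r, ∃ H : Finset ℕ,
    (∀ x ∈ H, x < n) ∧ (∀ x ∈ H, ∀ y ∈ H, C x = C y) ∧ f (gapSize H) < H.card}

/-! ### Auxiliary lemmas -/

lemma towerN_pos (t : ℕ) : 0 < towerN t := by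
  cases t with
  | zero => simp [towerN]
  | succ k => simp only [towerN]; positivity

lemma sum_two_pow_lt (t : ℕ) : (∑ i ∈ Finset.range t, 2 ^ i) < 2 ^ t := by
  induction t with
  | zero => simp
  | succ t ih => rw [Finset.sum_range_succ, pow_succ]; omega

lemma bits_inj (t : ℕ) (b c : ℕ → ℕ) (hb : ∀ i, b i ≤ 1) (hc : ∀ i, c i ≤ 1)
    (h : (∑ i ∈ Finset.range t, b i * 2 ^ i) = ∑ i ∈ Finset.range t, c i * 2 ^ i) :
    ∀ i < t, b i = c i := by
  induction t with
  | zero => intro i hi; omega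
  | succ t ih =>
    rw [Finset.sum_range_succ, Finset.sum_range_succ] at h
    have hSb : (∑ i ∈ Finset.range t, b i * 2 ^ i) < 2 ^ t :=
      lt_of_le_of_lt (Finset.sum_le_sum fun i _ => by
        have := hb i; nlinarith [pow_pos (by norm_num : (0:ℕ) < 2) i]) (sum_two_pow_lt t)
    have hSc : (∑ i ∈ Finset.range t, c i * 2 ^ i) < 2 ^ t :=
      lt_of_le_of_lt (Finset.sum_le_sum fun i _ => by
        have := hc i; nlinarith [pow_pos (by norm_num : (0:ℕ) < 2) i]) (sum_two_pow_lt t)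
    have hbt := hb t
    have hct := hc t
    have heq : b t = c t ∧ (∑ i ∈ Finset.range t, b i * 2 ^ i) = ∑ i ∈ Finset.range t, c i * 2 ^ i := by
      interval_cases hbt' : b t <;> interval_cases hct' : c t <;> omega
    intro i hi
    rcases Nat.lt_succ_iff_lt_or_eq.mp hi with h'|h'
    · exact ih heq.2 i h'
    · subst h'; exact heq.1

/-- Key lower-bound lemma: under the "tower-digit" coloring, any set in an aligned
level-`t` block which is digit-monochromatic and has gaps bounded by `d`
has at most `2 ^ d` elements. -/
lemma mainL : ∀ t b d (H : Finset ℕ),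
    (∀ x ∈ H, b * towerN t ≤ x ∧ x < (b + 1) * towerN t) →
    GapsBdd H d →
    (∀ i < t, ∀ x ∈ H, ∀ y ∈ H, x / towerN i % 2 = y / towerN i % 2) →
    H.card ≤ 2 ^ d := by
  intro t
  induction t with
  | zero =>
    intro b d H hrange _ _
    have h1 : H.card ≤ 1 := Finset.card_le_one.mpr (by
      intro x hx y hy
      have := hrange x hx; have := hrange y hy
      simp only [towerN] at *; omega)
    calc H.card ≤ 1 := h1
      _ ≤ 2 ^ d := Nat.one_le_two_pow
  | succ t ih =>
    intro b d H hrange hgaps hmono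
    set T := towerN t with hT
    have hTpos : 0 < T := towerN_pos t
    by_cases hd : d ≤ T
    · -- all of H lies in a single level-t block
      have key : ∀ n, ∀ x ∈ H, ∀ y ∈ H, x ≤ y → y - x = n → x / T = y / T := by
        intro n
        induction n using Nat.strong_induction_on with
        | _ n ihn =>
          intro x hx y hy hxy hn
          rcases eq_or_lt_of_le hxy with h | h
          · rw [h]
          · obtain ⟨z, hz, hxz, hzd⟩ := hgaps x hx ⟨y, hy, h⟩
            have hpar : x / T % 2 = z / T % 2 := hmono t (Nat.lt_succ_self t) x hx z hz
            have hq1 : x / T ≤ z / T := Nat.div_le_div_right (le_of_lt hxz)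
            have hq2 : z / T ≤ x / T + 1 := by
              have hx1 : x < (x / T + 1) * T := by
                have := Nat.mod_lt x hTpos
                have := Nat.div_add_mod x T
                nlinarith
              have hzlt : z < (x / T + 2) * T := by nlinarith
              have := (Nat.div_lt_iff_lt_mul hTpos).mpr hzlt
              omega
            have hxzb : x / T = z / T := by omega
            by_cases hyz : y ≤ z
            · have h1 : x / T ≤ y / T := Nat.div_le_div_right hxy
              have h2 : y / T ≤ z / T := Nat.div_le_div_right hyz
              omega
            · push_neg at hyz
              have := ihn (y - z) (by omega) z hz y hy (le_of_lt hyz) rfl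
              omega
      rcases Finset.eq_empty_or_nonempty H with he | hne
      · simp [he]
      · set m := H.min' hne with hm
        have hmH : m ∈ H := H.min'_mem hne
        apply ih (m / T) d H
        · intro x hx
          have hmx : m ≤ x := H.min'_le x hx
          have hblk : m / T = x / T := key (x - m) m hmH x hx hmx rfl
          constructor
          · rw [hblk]; exact Nat.div_mul_le_self x T
          · rw [hblk]
            have := Nat.mod_lt x hTpos
            have := Nat.div_add_mod x T
            nlinarith
        · exact hgaps
        · intro i hi; exact hmono i (Nat.lt_succ_of_lt hi)
    · -- d > T : the whole block has size towerN (t+1) = 2^T ≤ 2^d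
      push_neg at hd
      have hsub : H ⊆ Finset.Ico (b * towerN (t + 1)) ((b + 1) * towerN (t + 1)) := by
        intro x hx
        rw [Finset.mem_Ico]
        exact hrange x hx
      calc H.card ≤ (Finset.Ico (b * towerN (t + 1)) ((b + 1) * towerN (t + 1))).card :=
            Finset.card_le_card hsub
        _ = towerN (t + 1) := by rw [Nat.card_Ico, Nat.add_one_mul]; omega
        _ = 2 ^ T := rfl
        _ ≤ 2 ^ d := Nat.pow_le_pow_right (by norm_num) (le_of_lt hd)

/-- Interval lengths for the inductive Ramsey (existence) argument. -/
def brL : ℕ → ℕ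
  | 0 => 1
  | k + 1 => brL k * (2 ^ brL k + 2)

lemma brL_pos (k : ℕ) : 0 < brL k := by
  induction k with
  | zero => simp [brL]
  | succ k ih => simp only [brL]; positivity

/-- Existence: every coloring of a long enough interval using at most `k` colors has a
monochromatic `H` with `2 ^ gs(H) < |H|`. -/
lemma exists_mono (r : ℕ) : ∀ k (S : Finset (Fin r)) (C : ℕ → Fin r) (a : ℕ),
    S.card ≤ k → (∀ m, a ≤ m → m < a + brL k → C m ∈ S) →
    ∃ H : Finset ℕ, (∀ x ∈ H, a ≤ x ∧ x < a + brL k) ∧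
      (∀ x ∈ H, ∀ y ∈ H, C x = C y) ∧ 2 ^ gapSize H < H.card := by
  intro k
  induction k with
  | zero =>
    intro S C a hS hcol
    have : C a ∈ S := hcol a le_rfl (by simp [brL])
    have : S = ∅ := Finset.card_eq_zero.mp (Nat.le_zero.mp hS)
    simp [this] at *
  | succ k ih =>
    intro S C a hS hcol
    have hLpos := brL_pos k
    have hLsucc : brL (k + 1) = brL k * (2 ^ brL k + 2) := rfl
    have hL1 : brL k ≤ brL (k + 1) := by
      rw [hLsucc]; nlinarith [Nat.one_le_two_pow (n := brL k)]
    set c := C a with hc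
    have hcS : c ∈ S := hcol a le_rfl (by have := brL_pos (k+1); omega)
    by_cases hcase : ∃ j, a ≤ j ∧ j + brL k ≤ a + brL (k + 1) ∧
        ∀ m, j ≤ m → m < j + brL k → C m ≠ c
    · obtain ⟨j, hja, hjb, hjc⟩ := hcase
      have hS' : (S.erase c).card ≤ k := by
        rw [Finset.card_erase_of_mem hcS]; omega
      obtain ⟨H, h1, h2, h3⟩ := ih (S.erase c) C j hS' (by
        intro m hm1 hm2
        refine Finset.mem_erase.mpr ⟨hjc m hm1 hm2, hcol m (le_trans hja hm1) (by omega)⟩)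
      exact ⟨H, fun x hx => by have := h1 x hx; omega, h2, h3⟩
    · push_neg at hcase
      have hwin : ∀ j, a ≤ j → j + brL k ≤ a + brL (k + 1) →
          ∃ m, j ≤ m ∧ m < j + brL k ∧ C m = c := by
        intro j h1 h2
        obtain ⟨m, hm1, hm2, hm3⟩ := hcase j h1 h2
        exact ⟨m, hm1, hm2, hm3⟩
      set H : Finset ℕ := (Finset.Ico a (a + brL (k + 1))).filter (fun x => C x = c) with hH
      have hmemH : ∀ x, x ∈ H ↔ (a ≤ x ∧ x < a + brL (k + 1) ∧ C x = c) := by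
        intro x; simp [hH, Finset.mem_filter, Finset.mem_Ico, and_assoc]
      have hgaps : GapsBdd H (brL k) := by
        intro x hx hsucc
        rw [hmemH] at hx
        by_cases hfit : x + 1 + brL k ≤ a + brL (k + 1)
        · obtain ⟨m, hm1, hm2, hm3⟩ := hwin (x + 1) (by omega) hfit
          exact ⟨m, (hmemH m).mpr ⟨by omega, by omega, hm3⟩, by omega, by omega⟩
        · obtain ⟨y, hy, hxy⟩ := hsucc
          rw [hmemH] at hy
          exact ⟨y, (hmemH y).mpr hy, hxy, by omega⟩
      set nW := 2 ^ brL k + 2 with hnW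
      have hpick : ∀ i < nW, ∃ m, (a + i * brL k ≤ m ∧ m < a + i * brL k + brL k ∧ C m = c) := by
        intro i hi
        have hfit : (a + i * brL k) + brL k ≤ a + brL (k + 1) := by
          rw [hLsucc]; nlinarith
        obtain ⟨m, h1, h2, h3⟩ := hwin (a + i * brL k) (by omega) hfit
        exact ⟨m, h1, h2, h3⟩
      set f : ℕ → ℕ := fun i => sInf {m | a + i * brL k ≤ m ∧ m < a + i * brL k + brL k ∧ C m = c}
        with hf
      have hfmem : ∀ i < nW, a + i * brL k ≤ f i ∧ f i < a + i * brL k + brL k ∧ C (f i) = c := by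
        intro i hi
        exact Nat.sInf_mem (hpick i hi)
      have hcard : nW ≤ H.card := by
        have : (Finset.range nW).card ≤ H.card := by
          apply Finset.card_le_card_of_injOn f
          · intro i hi
            rw [Finset.mem_coe, Finset.mem_range] at hi
            obtain ⟨h1, h2, h3⟩ := hfmem i hi
            refine (hmemH (f i)).mpr ⟨by omega, ?_, h3⟩
            have : (i + 1) * brL k ≤ brL (k + 1) := by
              rw [hLsucc]; nlinarith
            nlinarith
          · have key : ∀ p q, p < nW → q < nW → p < q → f p < f q := by
              intro p q hp hq hpq
              obtain ⟨h1, h2, _⟩ := hfmem p hp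
              obtain ⟨h1', h2', _⟩ := hfmem q hq
              have : (p + 1) * brL k ≤ q * brL k := Nat.mul_le_mul_right _ (by omega)
              nlinarith
            intro i hi j hj hij
            simp only [Finset.coe_range, Set.mem_Iio] at hi hj
            rcases Nat.lt_trichotomy i j with h | h | h
            · exact absurd hij (Nat.ne_of_lt (key i j hi hj h))
            · exact h
            · exact absurd hij.symm (Nat.ne_of_lt (key j i hj hi h))
        simpa using this
      have hcard2 : 2 ≤ H.card := by
        have h2n : 2 ≤ nW := by have := Nat.one_le_two_pow (n := brL k); omega
        omega
      have hgs : gapSize H ≤ brL k := by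
        rw [gapSize, if_neg (by omega)]
        exact Nat.sInf_le hgaps
      refine ⟨H, ?_, ?_, ?_⟩
      · intro x hx; rw [hmemH] at hx; omega
      · intro x hx y hy
        rw [hmemH] at hx hy
        rw [hx.2.2, hy.2.2]
      · calc 2 ^ gapSize H ≤ 2 ^ brL k := Nat.pow_le_pow_right (by norm_num) hgs
          _ < nW := by omega
          _ ≤ H.card := hcard

/-- For `f(d) = 2^d`, `B_f(r) > 2_{⌊log₂ r⌋}`. -/
theorem brownB_lower_bound (r : ℕ) (hr : 0 < r) :
    towerN (Nat.log 2 r) < brownB (fun d => 2 ^ d) r := by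
  set t := Nat.log 2 r with ht
  set TT := towerN t with hTT
  have h2t : 2 ^ t ≤ r := Nat.pow_log_le_self 2 hr.ne'
  -- the tower-digit coloring
  set code : ℕ → ℕ := fun x => ∑ i ∈ Finset.range t, (x / towerN i % 2) * 2 ^ i with hcode
  have hcode_lt : ∀ x, code x < 2 ^ t := by
    intro x
    refine lt_of_le_of_lt (Finset.sum_le_sum fun i _ => ?_) (sum_two_pow_lt t)
    have : x / towerN i % 2 ≤ 1 := by omega
    nlinarith [pow_pos (by norm_num : (0:ℕ) < 2) i]
  set C : ℕ → Fin r := fun x => ⟨code x, lt_of_lt_of_le (hcode_lt x) h2t⟩ with hC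
  set SET := {n : ℕ | ∀ C : ℕ → Fin r, ∃ H : Finset ℕ,
    (∀ x ∈ H, x < n) ∧ (∀ x ∈ H, ∀ y ∈ H, C x = C y) ∧ (fun d => 2 ^ d) (gapSize H) < H.card}
    with hSET
  have hLr : brL r ∈ SET := by
    intro C'
    obtain ⟨H, h1, h2, h3⟩ := exists_mono r r Finset.univ C' 0
      (by simp) (fun m _ _ => Finset.mem_univ _)
    exact ⟨H, fun x hx => by have := h1 x hx; omega, h2, h3⟩
  have hne : SET.Nonempty := ⟨brL r, hLr⟩
  rw [brownB]
  by_contra hcon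
  push_neg at hcon
  have hmem : sInf SET ∈ SET := Nat.sInf_mem hne
  obtain ⟨H, hx, hmonoC, hcard0⟩ := hmem C
  have hcard : 2 ^ gapSize H < H.card := hcard0
  clear hcard0
  have hconTT : sInf SET ≤ TT := hcon
  clear_value SET
  clear hcon hmem hLr hne hSET
  have hxTT : ∀ x ∈ H, x < TT := fun x hxH => lt_of_lt_of_le (hx x hxH) hconTT
  by_cases hc1 : H.card ≤ 1
  · rw [gapSize, if_pos hc1] at hcard
    omega
  · have hGTT : GapsBdd H TT := by
      intro x hxH hsucc
      obtain ⟨y, hy, hxy⟩ := hsucc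
      exact ⟨y, hy, hxy, by have := hxTT y hy; omega⟩
    have hgsdef : gapSize H = sInf {d | GapsBdd H d} := by rw [gapSize, if_neg hc1]
    have hgaps : GapsBdd H (gapSize H) := by
      rw [hgsdef]
      exact Nat.sInf_mem (s := {d | GapsBdd H d}) ⟨TT, hGTT⟩
    have hbits : ∀ i < t, ∀ x ∈ H, ∀ y ∈ H, x / towerN i % 2 = y / towerN i % 2 := by
      intro i hi x hxH y hyH
      have hCeq : C x = C y := hmonoC x hxH y hyH
      have hcodeeq : code x = code y := congrArg Fin.val hCeq
      exact bits_inj t (fun i => x / towerN i % 2) (fun i => y / towerN i % 2)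
        (fun i => by show x / towerN i % 2 ≤ 1; omega)
        (fun i => by show y / towerN i % 2 ≤ 1; omega) hcodeeq i hi
    have hbound : H.card ≤ 2 ^ gapSize H := by
      apply mainL t 0 (gapSize H) H _ hgaps hbits
      intro x hxH
      constructor
      · omega
      · simpa using hxTT x hxH
    omega
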